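/- Let σ be a relational vocabulary and 𝒜 a finite σ-structure. Then the tree-depth of 𝒜 equals the E-coalgebra number of 𝒜; that is, for every k ≥ 1, 𝒜 admits a forest cover of its Gaifman graph of height at most k if and only if there exists an E_k-coalgebra α : 𝒜 → E_k 𝒜, and hence td(𝒜) = κ^E(𝒜), the least k for which an E_k-coalgebra on 𝒜 exists. -/

import Mathlib

/-- A relational vocabulary: a type of relation symbols with arities. -/
structure RelVocab : Type 1 where
  Rel : Type
  ar : Rel → ℕ

/-- A structure for a relational vocabulary. -/
structure RelStruct (σ : RelVocab) : Type 1 where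
  carrier : Type
  rel : ∀ R : σ.Rel, (Fin (σ.ar R) → carrier) → Prop

/-- Homomorphisms of relational structures. -/
def IsHom {σ : RelVocab} (𝒜 ℬ : RelStruct σ) (h : 𝒜.carrier → ℬ.carrier) : Prop :=
  ∀ (R : σ.Rel) (v : Fin (σ.ar R) → 𝒜.carrier), 𝒜.rel R v → ℬ.rel R (fun i => h (v i))

/-- Nonempty sequences over `A` of length at most `k`: the universe of `E_k 𝒜`. -/
def EkC (k : ℕ) (A : Type) : Type :=
  {l : List A // l ≠ [] ∧ l.length ≤ k}

/-- The counit: the last element of a sequence. -/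
def eps {k : ℕ} {A : Type} (s : EkC k A) : A :=
  s.1.getLast s.2.1

/-- Comparability in the prefix order. -/
def Cmp {A : Type} (s t : List A) : Prop :=
  s <+: t ∨ t <+: s

/-- The Ehrenfeucht–Fraïssé comonad `E_k` on structures. -/
def Ek {σ : RelVocab} (k : ℕ) (𝒜 : RelStruct σ) : RelStruct σ where
  carrier := EkC k 𝒜.carrier
  rel R v := (∀ i j, Cmp (v i).1 (v j).1) ∧ 𝒜.rel R (fun i => eps (v i))

/-- The prefix of `s` of length `i+1`. -/
def prefAt {k : ℕ} {A : Type} (s : EkC k A) (i : Fin s.1.length) : EkC k A :=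
  ⟨s.1.take (i + 1), by
    constructor
    · apply List.ne_nil_of_length_pos
      rw [List.length_take]
      exact lt_min (Nat.succ_pos _) (Nat.lt_of_le_of_lt (Nat.zero_le _) i.2)
    · rw [List.length_take]
      exact le_trans (min_le_right _ _) s.2.2⟩

/-- The Kleisli coextension `f* [a_1,…,a_j] = [f[a_1],…,f[a_1,…,a_j]]`. -/
def coext {k : ℕ} {A B : Type} (f : EkC k A → B) (s : EkC k A) : EkC k B :=
  ⟨List.ofFn (fun i : Fin s.1.length => f (prefAt s i)), by
    constructor
    · apply List.ne_nil_of_length_pos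
      rw [List.length_ofFn]
      exact List.length_pos_iff.mpr s.2.1
    · rw [List.length_ofFn]
      exact s.2.2⟩

/-- The adjacency relation of the Gaifman graph of `𝒜`. -/
def gaif {σ : RelVocab} (𝒜 : RelStruct σ) (a a' : 𝒜.carrier) : Prop :=
  a ≠ a' ∧ ∃ (R : σ.Rel) (v : Fin (σ.ar R) → 𝒜.carrier),
    𝒜.rel R v ∧ (∃ i, v i = a) ∧ (∃ j, v j = a')

/-- A forest cover, with universe `V`, of the graph `(V, adj)`, of height at most `k`:
a partial order on `V` whose predecessor sets are finite chains, in which adjacent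
vertices are comparable, and in which every chain has at most `k` elements. -/
structure ForestCoverOn (V : Type) (adj : V → V → Prop) (k : ℕ) where
  le : V → V → Prop
  refl : ∀ a, le a a
  antisymm : ∀ a b, le a b → le b a → a = b
  trans : ∀ a b c, le a b → le b c → le a c
  pred_finite : ∀ a, {b | le b a}.Finite
  pred_chain : ∀ a, IsChain le {b | le b a}
  cover : ∀ a a', adj a a' → le a a' ∨ le a' a
  height : ∀ C : Finset V, IsChain le ↑C → C.card ≤ k

/-- An `E_k`-coalgebra on `𝒜`: a homomorphism `α : 𝒜 → E_k 𝒜` such that, writing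
`α(a) = [a_1,…,a_j]`, one has `a_j = a` and `α(a_i) = [a_1,…,a_i]` for `1 ≤ i ≤ j`. -/
structure EkCoalgebra {σ : RelVocab} (𝒜 : RelStruct σ) (k : ℕ) where
  α : 𝒜.carrier → EkC k 𝒜.carrier
  hom : IsHom 𝒜 (Ek k 𝒜) α
  counit : ∀ a, eps (α a) = a
  comult : ∀ (a : 𝒜.carrier) (i : Fin (α a).1.length),
    (α ((α a).1.get i)).1 = (α a).1.take (i + 1)

section Aux

variable {V : Type} {adj : V → V → Prop} {k : ℕ}

lemma fc_exists_top (F : ForestCoverOn V adj k) (a : V)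
    (hne : ∃ b, F.le b a ∧ b ≠ a) :
    ∃ m, (F.le m a ∧ m ≠ a) ∧ ∀ b, F.le b a → b ≠ a → F.le b m := by
  classical
  set S : Finset V := (F.pred_finite a).toFinset.filter (· ≠ a) with hS
  have hmemS : ∀ b, b ∈ S ↔ (F.le b a ∧ b ≠ a) := by
    intro b; simp [hS, Set.Finite.mem_toFinset]
  obtain ⟨b0, hb0⟩ := hne
  obtain ⟨m, hmS, hmax⟩ := S.exists_max_image
    (fun b => ((F.pred_finite b).toFinset).card) ⟨b0, (hmemS b0).2 hb0⟩
  have hm := (hmemS m).1 hmS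
  refine ⟨m, hm, ?_⟩
  intro b hba hbne
  have hbS : b ∈ S := (hmemS b).2 ⟨hba, hbne⟩
  rcases eq_or_ne b m with rfl | hbm
  · exact F.refl b
  · rcases F.pred_chain a hba hm.1 hbm with h | h
    · exact h
    · by_contra hle
      have hsub : (F.pred_finite m).toFinset ⊆ (F.pred_finite b).toFinset := by
        intro c hc
        rw [Set.Finite.mem_toFinset] at *
        exact F.trans _ _ _ hc h
      have hss : (F.pred_finite m).toFinset ⊂ (F.pred_finite b).toFinset := by
        rw [Finset.ssubset_iff_of_subset hsub]
        exact ⟨b, by rw [Set.Finite.mem_toFinset]; exact F.refl b,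
          by rw [Set.Finite.mem_toFinset]; exact hle⟩
      exact absurd (hmax b hbS) (not_le.2 (Finset.card_lt_card hss))

open Classical in
noncomputable def chainL (F : ForestCoverOn V adj k) (a : V) : List V :=
  if h : ∃ m, (F.le m a ∧ m ≠ a) ∧ ∀ b, F.le b a → b ≠ a → F.le b m
  then chainL F h.choose ++ [a]
  else [a]
termination_by (F.pred_finite a).toFinset.card
decreasing_by
  obtain ⟨⟨hma, hne⟩, -⟩ := h.choose_spec
  apply Finset.card_lt_card
  rw [Finset.ssubset_iff_of_subset]
  · exact ⟨a, by rw [Set.Finite.mem_toFinset]; exact F.refl a,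
      by rw [Set.Finite.mem_toFinset]; exact fun hc => hne ((F.antisymm _ _ hc hma).symm)⟩
  · intro c hc
    rw [Set.Finite.mem_toFinset] at *
    exact F.trans _ _ _ hc hma

lemma chainL_eq_append (F : ForestCoverOn V adj k) (a : V) :
    ∃ l, chainL F a = l ++ [a] := by
  rw [chainL]; split
  · exact ⟨_, rfl⟩
  · exact ⟨[], rfl⟩

lemma chainL_ne_nil (F : ForestCoverOn V adj k) (a : V) : chainL F a ≠ [] := by
  obtain ⟨l, hl⟩ := chainL_eq_append F a
  simp [hl]

lemma chainL_getLast (F : ForestCoverOn V adj k) (a : V) :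
    (chainL F a).getLast (chainL_ne_nil F a) = a := by
  obtain ⟨l, hl⟩ := chainL_eq_append F a
  rw [List.getLast_congr _ (by simp) hl]
  exact List.getLast_append _
lemma chainL_mem (F : ForestCoverOn V adj k) (a : V) :
    ∀ b ∈ chainL F a, F.le b a := by
  induction a using chainL.induct F with
  | case1 a h ih =>
    rw [chainL, dif_pos h]
    intro b hb
    rcases List.mem_append.1 hb with hb | hb
    · exact F.trans _ _ _ (ih b hb) h.choose_spec.1.1
    · rw [List.mem_singleton] at hb; subst hb; exact F.refl b
  | case2 a h =>
    rw [chainL, dif_neg h]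
    intro b hb
    rw [List.mem_singleton] at hb; subst hb; exact F.refl b

lemma chainL_nodup (F : ForestCoverOn V adj k) (a : V) : (chainL F a).Nodup := by
  induction a using chainL.induct F with
  | case1 a h ih =>
    rw [chainL, dif_pos h]
    refine List.Nodup.append ih (List.nodup_singleton a) ?_
    intro b hb hb'
    rw [List.mem_singleton] at hb'; subst hb'
    have hle : F.le b h.choose := chainL_mem F _ b hb
    exact h.choose_spec.1.2 (F.antisymm _ _ h.choose_spec.1.1 hle)
  | case2 a h =>
    rw [chainL, dif_neg h]
    exact List.nodup_singleton a

lemma chainL_prefix (F : ForestCoverOn V adj k) (a : V) :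
    ∀ b, F.le b a → chainL F b <+: chainL F a := by
  induction a using chainL.induct F with
  | case1 a h ih =>
    intro b hba
    rcases eq_or_ne b a with rfl | hne
    · exact List.prefix_refl _
    · have hbm : F.le b h.choose := h.choose_spec.2 b hba hne
      refine (ih b hbm).trans ?_
      have heq : chainL F a = chainL F h.choose ++ [a] := by rw [chainL, dif_pos h]
      rw [heq]
      exact ⟨[a], rfl⟩
  | case2 a h =>
    intro b hba
    rcases eq_or_ne b a with rfl | hne
    · exact List.prefix_refl _
    · exact absurd ⟨b, hba, hne⟩ (fun hx => h (fc_exists_top F a hx))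

lemma chainL_take (F : ForestCoverOn V adj k) (a : V) :
    ∀ (i : ℕ) (hi : i < (chainL F a).length),
      chainL F ((chainL F a).get ⟨i, hi⟩) = (chainL F a).take (i + 1) := by
  induction a using chainL.induct F with
  | case1 a h ih =>
    have heq : chainL F a = chainL F h.choose ++ [a] := by rw [chainL, dif_pos h]
    intro i hi
    rcases lt_or_ge i (chainL F h.choose).length with hlt | hge
    · have h1 : (chainL F a).get ⟨i, hi⟩ = (chainL F h.choose).get ⟨i, hlt⟩ := by
        simp only [List.get_eq_getElem]
        rw [List.getElem_of_eq heq, List.getElem_append_left hlt]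
      rw [h1, ih i hlt, heq, List.take_append_of_le_length (by omega)]
    · have hilen : i = (chainL F h.choose).length := by
        have := hi
        rw [heq, List.length_append, List.length_singleton] at this
        omega
      have h1 : (chainL F a).get ⟨i, hi⟩ = a := by
        simp only [List.get_eq_getElem]
        rw [List.getElem_of_eq heq]
        subst hilen
        simp
      rw [h1, heq, List.take_of_length_le (by simp [hilen])]
  | case2 a h =>
    have heq : chainL F a = [a] := by rw [chainL, dif_neg h]
    intro i hi
    have hi0 : i = 0 := by rw [heq] at hi; simpa using hi
    subst hi0
    have h1 : (chainL F a).get ⟨0, hi⟩ = a := by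
      simp only [List.get_eq_getElem]
      rw [List.getElem_of_eq heq]; rfl
    rw [h1, heq]
    rfl

lemma chainL_len_le (F : ForestCoverOn V adj k) (a : V) : (chainL F a).length ≤ k := by
  classical
  have hnd := chainL_nodup F a
  have hchain : IsChain F.le ↑(chainL F a).toFinset := by
    intro x hx y hy hxy
    simp only [Finset.coe_sort_coe, List.coe_toFinset, Set.mem_setOf_eq] at hx hy
    exact F.pred_chain a (chainL_mem F a x hx) (chainL_mem F a y hy) hxy
  have := F.height (chainL F a).toFinset hchain
  rwa [List.toFinset_card_of_nodup hnd] at this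

end Aux

theorem stmt10 (σ : RelVocab) (𝒜 : RelStruct σ) (hfin : Finite 𝒜.carrier) :
    (∀ k : ℕ, 1 ≤ k →
      (Nonempty (ForestCoverOn 𝒜.carrier (gaif 𝒜) k) ↔ Nonempty (EkCoalgebra 𝒜 k))) ∧
    sInf {k : ℕ | 1 ≤ k ∧ Nonempty (ForestCoverOn 𝒜.carrier (gaif 𝒜) k)} =
      sInf {k : ℕ | 1 ≤ k ∧ Nonempty (EkCoalgebra 𝒜 k)} := by
  classical
  haveI := hfin
  have main : ∀ k : ℕ,
      Nonempty (ForestCoverOn 𝒜.carrier (gaif 𝒜) k) ↔ Nonempty (EkCoalgebra 𝒜 k) := by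
    intro k
    constructor
    · rintro ⟨F⟩
      refine ⟨⟨fun a => ⟨chainL F a, chainL_ne_nil F a, chainL_len_le F a⟩, ?_, ?_, ?_⟩⟩
      · intro R v hv
        refine ⟨fun i j => ?_, ?_⟩
        · show Cmp (chainL F (v i)) (chainL F (v j))
          rcases eq_or_ne (v i) (v j) with he | hne
          · rw [he]; exact Or.inl (List.prefix_refl _)
          · have hg : gaif 𝒜 (v i) (v j) := ⟨hne, R, v, hv, ⟨i, rfl⟩, ⟨j, rfl⟩⟩
            rcases F.cover _ _ hg with h | h
            · exact Or.inl (chainL_prefix F _ _ h)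
            · exact Or.inr (chainL_prefix F _ _ h)
        · have h2 : (fun i => eps (⟨chainL F (v i), chainL_ne_nil F (v i),
              chainL_len_le F (v i)⟩ : EkC k 𝒜.carrier)) = v :=
            funext fun i => chainL_getLast F (v i)
          show 𝒜.rel R _
          rw [h2]; exact hv
      · intro a
        exact chainL_getLast F a
      · intro a i
        exact chainL_take F a i.1 i.2
    · rintro ⟨c⟩
      have key : ∀ a b : 𝒜.carrier, (c.α a).1 = (c.α b).1 → a = b := by
        intro a b hl
        have h3 : eps (c.α a) = eps (c.α b) := by
          unfold eps
          exact List.getLast_congr _ (c.α b).2.1 hl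
        rw [c.counit a, c.counit b] at h3; exact h3
      refine ⟨⟨fun a b => (c.α a).1 <+: (c.α b).1, fun a => List.prefix_refl _,
        ?_, ?_, ?_, ?_, ?_, ?_⟩⟩
      · intro a b h1 h2
        exact key a b (h1.eq_of_length (le_antisymm h1.length_le h2.length_le))
      · intro a b d h1 h2; exact h1.trans h2
      · intro a; exact Set.toFinite _
      · intro a x hx y hy hxy
        exact List.prefix_or_prefix_of_prefix hx hy
      · intro a a' hg
        obtain ⟨hne, R, v, hv, ⟨i, hi⟩, ⟨j, hj⟩⟩ := hg
        have h3 := (c.hom R v hv).1 i j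
        simp only at h3
        rw [hi, hj] at h3
        exact h3
      · intro C hC
        have hinj : Set.InjOn (fun a => (c.α a).1.length) ↑C := by
          intro a ha b hb hlen
          rcases eq_or_ne a b with rfl | hne
          · rfl
          · rcases hC ha hb hne with h | h
            · exact key a b (h.eq_of_length hlen)
            · exact key a b (h.eq_of_length hlen.symm).symm
        have hmaps : ∀ a ∈ C, (c.α a).1.length ∈ Finset.Icc 1 k := by
          intro a _
          exact Finset.mem_Icc.2 ⟨List.length_pos_iff.2 (c.α a).2.1, (c.α a).2.2⟩
        have := Finset.card_le_card_of_injOn (fun a => (c.α a).1.length) hmaps hinj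
        simpa [Nat.card_Icc] using this
  refine ⟨fun k _ => main k, ?_⟩
  congr 1
  ext k
  exact and_congr_right fun _ => main k
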